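/- Let ι be a finite type and H, X : Matrix ι ι ℂ with X·X = 1 and H·(X·H·X) = (X·H·X)·H. Then for every t ∈ ℝ, Matrix.exp((Complex.I·t)•H) · X · Matrix.exp((−(Complex.I·t))•H) = Matrix.exp((Complex.I·t)•(H − X·H·X)) · X. -/

import Mathlib

open Matrix NormedSpace

/-- Abstract Lemma B.1: Heisenberg evolution of an involution `X` under `H`,
when `H` commutes with `X·H·X`:
`e^{itH} X e^{-itH} = e^{it(H - XHX)} X`. -/
theorem heisenberg_evolution_involution {ι : Type*} [Fintype ι] [DecidableEq ι]
    (H X : Matrix ι ι ℂ) (hX : X * X = 1)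
    (hcomm : H * (X * H * X) = (X * H * X) * H) :
    ∀ t : ℝ,
      exp ((Complex.I * t) • H) * X * exp ((-(Complex.I * t)) • H) =
        exp ((Complex.I * t) • (H - X * H * X)) * X := by
  intro t
  set c : ℂ := Complex.I * t with hc
  have U : (Matrix ι ι ℂ)ˣ := ⟨X, X, hX, hX⟩
  have hconj : exp ((-c) • (X * H * X)) = X * exp ((-c) • H) * X := by
    have := Matrix.exp_units_conj (⟨X, X, hX, hX⟩ : (Matrix ι ι ℂ)ˣ) ((-c) • H)
    simpa [Matrix.mul_smul, Matrix.smul_mul, mul_assoc] using this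
  have hcsplit : (c • (H - X * H * X)) = c • H + (-c) • (X * H * X) := by
    rw [smul_sub, neg_smul, sub_eq_add_neg]
  have hcommute : Commute (c • H) ((-c) • (X * H * X)) := by
    apply Commute.smul_left
    apply Commute.smul_right
    exact hcomm
  rw [hcsplit, Matrix.exp_add_of_commute _ _ hcommute, hconj]
  calc exp (c • H) * X * exp ((-c) • H)
      = exp (c • H) * X * exp ((-c) • H) * (X * X) := by rw [hX, mul_one]
    _ = exp (c • H) * (X * exp ((-c) • H) * X) * X := by
        simp only [mul_assoc]
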